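/- Let (A, 𝒢, α, β) be an object crossed system. The ring A ⋊^α_β 𝒢 is unital if and only if the set 𝒢₀ of objects of 𝒢 is finite; in that case its multiplicative identity is Σ_{e∈𝒢₀} 1_{A_e} u_e. -/

import Mathlib

open CategoryTheory

universe u v

/-- The type of all morphisms of a groupoid `𝒢`, bundled with their source and target. -/
abbrev Mor (𝒢 : Type u) [Groupoid 𝒢] : Type _ := Σ (e f : 𝒢), e ⟶ f

/-- A grading of a (not necessarily unital) ring `R` by a groupoid `𝒢`:
`R` is the internal direct sum of additive subgroups `grade σ`, one for each
morphism `σ`, with `R_σ R_τ ⊆ R_{στ}` for composable pairs (note that the paper's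
product `στ`, requiring `d(σ) = r(τ)`, is `τ ≫ σ` in categorical notation), and
`R_σ R_τ = 0` for non-composable pairs. -/
structure GroupoidGrading (𝒢 : Type u) [Groupoid 𝒢] (R : Type v) [NonUnitalRing R] where
  grade : ∀ ⦃e f : 𝒢⦄, (e ⟶ f) → AddSubgroup R
  decompose : ∀ r : R, ∃ (s : Finset (Mor 𝒢)) (c : Mor 𝒢 → R),
    (∀ σ : Mor 𝒢, c σ ∈ grade σ.2.2) ∧ r = ∑ σ ∈ s, c σ
  indep : ∀ (s : Finset (Mor 𝒢)) (c : Mor 𝒢 → R),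
    (∀ σ : Mor 𝒢, c σ ∈ grade σ.2.2) → (∑ σ ∈ s, c σ) = 0 → ∀ σ ∈ s, c σ = 0
  mul_mem : ∀ ⦃a b c : 𝒢⦄ (σ : b ⟶ c) (τ : a ⟶ b),
    ∀ x ∈ grade σ, ∀ y ∈ grade τ, x * y ∈ grade (τ ≫ σ)
  mul_eq_zero : ∀ ⦃a b b' c : 𝒢⦄ (σ : b ⟶ c) (τ : a ⟶ b'), b' ≠ b →
    ∀ x ∈ grade σ, ∀ y ∈ grade τ, x * y = 0

/-- Object unitality data for a groupoid graded ring: a family of local identities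
`one e ∈ R_e` such that `1_{R_{r(σ)}} x = x 1_{R_{d(σ)}} = x` for every homogeneous
`x ∈ R_σ` (in particular each `R_e` is a unital ring with identity `one e`). -/
structure ObjectUnital {𝒢 : Type u} [Groupoid 𝒢] {R : Type v} [NonUnitalRing R]
    (g : GroupoidGrading 𝒢 R) where
  one : 𝒢 → R
  one_mem : ∀ e : 𝒢, one e ∈ g.grade (𝟙 e)
  one_mul : ∀ ⦃e f : 𝒢⦄ (σ : e ⟶ f), ∀ x ∈ g.grade σ, one f * x = x
  mul_one : ∀ ⦃e f : 𝒢⦄ (σ : e ⟶ f), ∀ x ∈ g.grade σ, x * one e = x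
/-- An object crossed system `(A, 𝒢, α, β)`: a family of nonzero unital rings `A e`
indexed by the objects of `𝒢`, a weak action `α` assigning to each morphism
`σ : e ⟶ f` (so `d(σ) = e`, `r(σ) = f`) a ring isomorphism `α σ : A e ≃+* A f` with
`α (𝟙 e) = id`, and an `α`-cocycle `β` assigning to each composable pair (in the paper's
notation `β_{σ,τ}` for `d(σ) = r(τ)`, i.e. `τ : a ⟶ b`, `σ : b ⟶ c`) a unit of `A c`. -/
structure ObjectCrossedSystem (𝒢 : Type u) [Groupoid 𝒢]
    (A : 𝒢 → Type v) [∀ e, Ring (A e)] where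
  nontriv : ∀ e : 𝒢, (0 : A e) ≠ 1
  α : ∀ ⦃e f : 𝒢⦄, (e ⟶ f) → (A e ≃+* A f)
  α_id : ∀ e : 𝒢, α (𝟙 e) = RingEquiv.refl (A e)
  β : ∀ ⦃a b c : 𝒢⦄, (b ⟶ c) → (a ⟶ b) → (A c)ˣ
  β_id_right : ∀ ⦃b c : 𝒢⦄ (σ : b ⟶ c), β σ (𝟙 b) = 1
  β_id_left : ∀ ⦃b c : 𝒢⦄ (σ : b ⟶ c), β (𝟙 c) σ = 1
  α_α : ∀ ⦃a b c : 𝒢⦄ (σ : b ⟶ c) (τ : a ⟶ b) (x : A a),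
    α σ (α τ x) = (β σ τ : A c) * α (τ ≫ σ) x * (((β σ τ)⁻¹ : (A c)ˣ) : A c)
  cocycle : ∀ ⦃a b c d : 𝒢⦄ (σ : c ⟶ d) (τ : b ⟶ c) (ρ : a ⟶ b),
    (β σ τ : A d) * (β (τ ≫ σ) ρ : A d) = α σ (β τ ρ : A c) * (β σ (ρ ≫ τ) : A d)

/-- The underlying additive group of the crossed product `A ⋊^α_β 𝒢`: finitely supported
families `(a_σ)` indexed by the morphisms of `𝒢` with `a_σ ∈ A_{r(σ)}`; the element
`a u_σ` is `uElt σ a` below. -/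
abbrev CrossedProd (𝒢 : Type u) [Groupoid 𝒢] (A : 𝒢 → Type v) [∀ e, AddCommGroup (A e)] :=
  Π₀ σ : Mor 𝒢, A σ.2.1

open Classical in
/-- The element `a u_σ` of the crossed product. -/
noncomputable def uElt {𝒢 : Type u} [Groupoid 𝒢] {A : 𝒢 → Type v} [∀ e, AddCommGroup (A e)]
    {e f : 𝒢} (σ : e ⟶ f) (a : A f) : CrossedProd 𝒢 A :=
  DFinsupp.single (⟨e, f, σ⟩ : Mor 𝒢) a

/-- The element `1_{A_e} u_e` of the crossed product. -/
noncomputable def cpOne {𝒢 : Type u} [Groupoid 𝒢] (A : 𝒢 → Type v) [∀ e, Ring (A e)]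
    (e : 𝒢) : CrossedProd 𝒢 A :=
  uElt (𝟙 e) (1 : A e)

open Classical in
/-- The product of the crossed product `A ⋊^α_β 𝒢`, determined biadditively by
`(a u_σ)(b u_τ) = a α_σ(b) β_{σ,τ} u_{στ}` for composable `(σ,τ)` (i.e. `d(σ) = r(τ)`;
 in categorical notation `στ = τ ≫ σ`) and `(a u_σ)(b u_τ) = 0` otherwise. -/
noncomputable def cpMul {𝒢 : Type u} [Groupoid 𝒢] {A : 𝒢 → Type v} [∀ e, Ring (A e)]
    (S : ObjectCrossedSystem 𝒢 A) (x y : CrossedProd 𝒢 A) : CrossedProd 𝒢 A :=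
  x.sum fun σ a => y.sum fun τ b =>
    if h : τ.2.1 = σ.1 then
      uElt ((τ.2.2 ≫ eqToHom h) ≫ σ.2.2)
        (a * S.α σ.2.2 (cast (congrArg A h) b) * (S.β σ.2.2 (τ.2.2 ≫ eqToHom h) : A σ.2.1))
    else 0

section Aux
open Classical
variable {𝒢 : Type u} [Groupoid 𝒢] {A : 𝒢 → Type v} [∀ e, Ring (A e)]
  (S : ObjectCrossedSystem 𝒢 A)

omit [Groupoid 𝒢] in
lemma castA_zero {e e' : 𝒢} (h : e = e') (hA : A e = A e') : cast hA (0 : A e) = 0 := by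
  subst h; rfl

omit [Groupoid 𝒢] in
lemma castA_add {e e' : 𝒢} (h : e = e') (hA : A e = A e') (a b : A e) :
    cast hA (a + b) = cast hA a + cast hA b := by
  subst h; rfl

omit [Groupoid 𝒢] in
lemma castA_self {e : 𝒢} (hA : A e = A e) (a : A e) : cast hA a = a := rfl

lemma uElt_zero {e f : 𝒢} (σ : e ⟶ f) : uElt σ (0 : A f) = 0 := DFinsupp.single_zero _

lemma uElt_add {e f : 𝒢} (σ : e ⟶ f) (a b : A f) :
    uElt σ (a + b) = uElt σ a + uElt σ b := DFinsupp.single_add _ _ _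

/-- generic: a `DFinsupp.sum` of a pointwise-zero function vanishes. -/
lemma dsum_zero_fun {ι : Type*} [DecidableEq ι] {β : ι → Type*} [∀ i, Zero (β i)]
    [∀ (i : ι) (x : β i), Decidable (x ≠ 0)] {γ : Type*} [AddCommMonoid γ]
    (y : Π₀ i, β i) (g : ∀ i, β i → γ) (hg : ∀ i b, g i b = 0) : y.sum g = 0 := by
  rw [DFinsupp.sum]
  exact Finset.sum_eq_zero fun i _ => hg _ _

lemma dsum_add_fun {ι : Type*} [DecidableEq ι] {β : ι → Type*} [∀ i, Zero (β i)]
    [∀ (i : ι) (x : β i), Decidable (x ≠ 0)] {γ : Type*} [AddCommMonoid γ]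
    (y : Π₀ i, β i) (g g1 g2 : ∀ i, β i → γ) (hg : ∀ i b, g i b = g1 i b + g2 i b) :
    y.sum g = y.sum g1 + y.sum g2 := by
  rw [DFinsupp.sum, DFinsupp.sum, DFinsupp.sum, ← Finset.sum_add_distrib]
  exact Finset.sum_congr rfl fun i _ => hg _ _

lemma uElt_sum {γ : Type*} [AddCommMonoid γ] {e f : 𝒢} (σ : e ⟶ f) (a : A f)
    (g : ∀ τ : Mor 𝒢, A τ.2.1 → γ) (hg : g ⟨e, f, σ⟩ 0 = 0) :
    (uElt σ a).sum g = g ⟨e, f, σ⟩ a :=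
  DFinsupp.sum_single_index hg

lemma inner_zero {e f : 𝒢} (σ : e ⟶ f) (a : A f) (τ : Mor 𝒢)
    (C : τ.2.1 = e → A τ.2.1 = A e) :
    (if h : τ.2.1 = e then
      uElt ((τ.2.2 ≫ eqToHom h) ≫ σ)
        (a * S.α σ (cast (C h) (0 : A τ.2.1)) * (S.β σ (τ.2.2 ≫ eqToHom h) : A f))
     else 0) = 0 := by
  split
  next h => rw [castA_zero h, map_zero, mul_zero, zero_mul, uElt_zero]
  next => rfl

lemma cpMul_single_single {e f e' f' : 𝒢} (σ : e ⟶ f) (τ : e' ⟶ f') (a : A f) (b : A f') :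
    cpMul S (uElt σ a) (uElt τ b) =
      if h : f' = e then
        uElt ((τ ≫ eqToHom h) ≫ σ)
          (a * S.α σ (cast (congrArg A h) b) * (S.β σ (τ ≫ eqToHom h) : A f))
      else 0 := by
  unfold cpMul
  refine (uElt_sum σ a _ ?_).trans ((uElt_sum τ b _ ?_).trans ?_)
  · refine dsum_zero_fun _ _ fun τ' b' => ?_
    dsimp only
    split
    next h => rw [zero_mul, zero_mul, uElt_zero]
    next => rfl
  · exact inner_zero S σ a _ _
  · rfl

lemma cpMul_zero_left (y : CrossedProd 𝒢 A) : cpMul S 0 y = 0 := by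
  unfold cpMul; exact DFinsupp.sum_zero_index

lemma cpMul_zero_right (x : CrossedProd 𝒢 A) : cpMul S x 0 = 0 := by
  unfold cpMul
  refine dsum_zero_fun _ _ fun σ a => ?_
  exact DFinsupp.sum_zero_index

lemma cpMul_add_left (x x' y : CrossedProd 𝒢 A) :
    cpMul S (x + x') y = cpMul S x y + cpMul S x' y := by
  unfold cpMul
  rw [DFinsupp.sum_add_index]
  · intro σ
    refine dsum_zero_fun _ _ fun τ b => ?_
    split
    next h => rw [zero_mul, zero_mul, uElt_zero]
    next => rfl
  · intro σ a₁ a₂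
    refine dsum_add_fun _ _ _ _ fun τ b => ?_
    split
    next h => rw [add_mul, add_mul, uElt_add]
    next => rw [add_zero]

lemma cpMul_add_right (x y y' : CrossedProd 𝒢 A) :
    cpMul S x (y + y') = cpMul S x y + cpMul S x y' := by
  unfold cpMul
  refine dsum_add_fun _ _ _ _ fun σ a => ?_
  rw [DFinsupp.sum_add_index]
  · exact fun τ => inner_zero S σ.2.2 a τ _
  · intro τ b₁ b₂
    split
    next h => rw [castA_add h, map_add, mul_add, add_mul, uElt_add]
    next => rw [add_zero]

lemma cpMul_sum_left {ι : Type*} (s : Finset ι) (f : ι → CrossedProd 𝒢 A)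
    (y : CrossedProd 𝒢 A) :
    cpMul S (∑ i ∈ s, f i) y = ∑ i ∈ s, cpMul S (f i) y := by
  classical
  induction s using Finset.induction_on with
  | empty => simpa using cpMul_zero_left S y
  | insert _ _ h ih =>
    rw [Finset.sum_insert h, Finset.sum_insert h, cpMul_add_left, ih]

lemma cpMul_sum_right {ι : Type*} (s : Finset ι) (f : ι → CrossedProd 𝒢 A)
    (x : CrossedProd 𝒢 A) :
    cpMul S x (∑ i ∈ s, f i) = ∑ i ∈ s, cpMul S x (f i) := by
  classical
  induction s using Finset.induction_on with
  | empty => simpa using cpMul_zero_right S x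
  | insert _ _ h ih =>
    rw [Finset.sum_insert h, Finset.sum_insert h, cpMul_add_right, ih]

end Aux

section Main
open Classical
variable {𝒢 : Type u} [Groupoid 𝒢] {A : 𝒢 → Type v} [∀ e, Ring (A e)]
  (S : ObjectCrossedSystem 𝒢 A)

lemma sum_cpOne_mul_single [Fintype 𝒢] {e f : 𝒢} (σ : e ⟶ f) (b : A f) :
    cpMul S (∑ e' : 𝒢, cpOne A e') (uElt σ b) = uElt σ b := by
  rw [cpMul_sum_left]
  rw [Finset.sum_eq_single f]
  · rw [cpOne, cpMul_single_single, dif_pos rfl]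
    simp only [eqToHom_refl, Category.comp_id, castA_self, S.α_id, RingEquiv.refl_apply,
      S.β_id_left, Units.val_one, one_mul, mul_one]
  · intro e' _ hne
    rw [cpOne, cpMul_single_single, dif_neg (Ne.symm hne)]
  · intro h
    exact absurd (Finset.mem_univ f) h

lemma single_mul_sum_cpOne [Fintype 𝒢] {e f : 𝒢} (σ : e ⟶ f) (b : A f) :
    cpMul S (uElt σ b) (∑ e' : 𝒢, cpOne A e') = uElt σ b := by
  rw [cpMul_sum_right]
  rw [Finset.sum_eq_single e]
  · rw [cpOne, cpMul_single_single, dif_pos rfl]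
    simp only [eqToHom_refl, Category.comp_id, Category.id_comp, castA_self, map_one,
      S.β_id_right, Units.val_one, one_mul, mul_one]
  · intro e' _ hne
    rw [cpOne, cpMul_single_single, dif_neg hne]
  · intro h
    exact absurd (Finset.mem_univ e) h

lemma left_id [Fintype 𝒢] (x : CrossedProd 𝒢 A) :
    cpMul S (∑ e : 𝒢, cpOne A e) x = x := by
  induction x using DFinsupp.induction with
  | h0 => exact cpMul_zero_right S _
  | ha i b f hf hb ih =>
    obtain ⟨e', f', m⟩ := i
    rw [cpMul_add_right, ih]
    congr 1
    exact sum_cpOne_mul_single S m b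

lemma right_id [Fintype 𝒢] (x : CrossedProd 𝒢 A) :
    cpMul S x (∑ e : 𝒢, cpOne A e) = x := by
  induction x using DFinsupp.induction with
  | h0 => exact cpMul_zero_left S _
  | ha i b f hf hb ih =>
    obtain ⟨e', f', m⟩ := i
    rw [cpMul_add_left, ih]
    congr 1
    exact single_mul_sum_cpOne S m b

include S in
lemma cpOne_ne_zero (e : 𝒢) : cpOne A e ≠ 0 := by
  rw [cpOne, uElt]
  simp only [ne_eq, DFinsupp.single_eq_zero]
  exact fun h => S.nontriv e h.symm

lemma exists_source (o : CrossedProd 𝒢 A)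
    (ho : ∀ x : CrossedProd 𝒢 A, cpMul S o x = x ∧ cpMul S x o = x) (e : 𝒢) :
    ∃ σ ∈ DFinsupp.support o, σ.1 = e := by
  by_contra hc
  push_neg at hc
  apply cpOne_ne_zero S e
  rw [← (ho (cpOne A e)).1]
  unfold cpMul
  rw [DFinsupp.sum]
  refine Finset.sum_eq_zero fun σ hσ => ?_
  rw [cpOne, uElt_sum (𝟙 e) 1 _ ?_]
  · exact dif_neg fun h => hc σ hσ h.symm
  · exact inner_zero S σ.2.2 (o σ) _ _

end Main

/-- The crossed product `A ⋊^α_β 𝒢` of an object crossed system is a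
unital ring iff the set of objects of `𝒢` is finite; in that case its multiplicative
identity is `∑_{e ∈ 𝒢₀} 1_{A_e} u_e`. -/
theorem stmt8 {𝒢 : Type u} [Groupoid 𝒢] {A : 𝒢 → Type v} [∀ e, Ring (A e)]
    (S : ObjectCrossedSystem 𝒢 A) :
    ((∃ o : CrossedProd 𝒢 A, ∀ x : CrossedProd 𝒢 A, cpMul S o x = x ∧ cpMul S x o = x) ↔
      Finite 𝒢) ∧
    (∀ _ : Fintype 𝒢, ∀ x : CrossedProd 𝒢 A,
      cpMul S (∑ e : 𝒢, cpOne A e) x = x ∧ cpMul S x (∑ e : 𝒢, cpOne A e) = x) := by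

  classical
  constructor
  · constructor
    · rintro ⟨o, ho⟩
      have hc : ∀ e : 𝒢, ∃ σ ∈ DFinsupp.support o, σ.1 = e := exists_source S o ho
      choose g hg1 hg2 using hc
      have hinj : Function.Injective (fun e => (⟨g e, hg1 e⟩ : ↥(DFinsupp.support o))) := by
        intro e1 e2 h
        have : g e1 = g e2 := congrArg Subtype.val h
        rw [← hg2 e1, ← hg2 e2, this]
      exact Finite.of_injective _ hinj
    · intro h
      letI := Fintype.ofFinite 𝒢
      exact ⟨∑ e : 𝒢, cpOne A e, fun x => ⟨left_id S x, right_id S x⟩⟩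
  · intro inst x
    exact ⟨left_id S x, right_id S x⟩
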